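/- Let (S, (A_i)_{i=1}^m, H, P, (R_i)_{i=1}^m) be a tabular episodic Markov game satisfying Condition 2 with target policy π† and gap η > 0. Under the η-gap attack: (i) for every agent i and every Markov product policy π_{-i} of the other agents, π†_i is a best response of agent i toward π_{-i} in the post-attack game, i.e., Ṽ^{π†_i × π_{-i}}_{i,1}(s) = Ṽ^{†,π_{-i}}_{i,1}(s) for every state s; (ii) π† is a Nash equilibrium of the post-attack game; and (iii) if every state s ∈ S is reachable (visited with positive probability) at every step h ∈ {1,…,H} under π†, then π† is the unique Nash equilibrium of the post-attack game. -/

import Mathlib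

open Finset

namespace MGAttack

variable {S : Type} [Fintype S] [DecidableEq S]
variable {m : ℕ} {A : Fin m → Type} [∀ i, Fintype (A i)] [∀ i, DecidableEq (A i)]

/-- `VA P f π n h s`: expected sum of `f` over `n` steps starting from step `h` in
state `s`, when joint actions are drawn from the joint pmf `π` and states evolve
according to `P`.  With `f` a mean-reward function this is the value function. -/
noncomputable def VA (P : ℕ → S → (∀ i, A i) → S → ℝ) (f : ℕ → S → (∀ i, A i) → ℝ)
    (π : ℕ → S → (∀ i, A i) → ℝ) : ℕ → ℕ → S → ℝ
  | 0, _, _ => 0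
  | n + 1, h, s => ∑ a, π h s a * (f h s a + ∑ s', P h s a s' * VA P f π n (h + 1) s')

/-- Value function `V^π_h(s)` for horizon `H` (steps `h, h+1, …, H`). -/
noncomputable def Vf (P : ℕ → S → (∀ i, A i) → S → ℝ) (R : ℕ → S → (∀ i, A i) → ℝ)
    (π : ℕ → S → (∀ i, A i) → ℝ) (H h : ℕ) (s : S) : ℝ :=
  VA P R π (H + 1 - h) h s

/-- Q-function `Q^π_h(s,a)` for horizon `H`. -/
noncomputable def Qf (P : ℕ → S → (∀ i, A i) → S → ℝ) (R : ℕ → S → (∀ i, A i) → ℝ)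
    (π : ℕ → S → (∀ i, A i) → ℝ) (H h : ℕ) (s : S) (a : ∀ i, A i) : ℝ :=
  R h s a + ∑ s', P h s a s' * VA P R π (H - h) (h + 1) s'

/-- Joint pmf of a Markov product policy. -/
noncomputable def jp (π : ∀ i : Fin m, ℕ → S → A i → ℝ) : ℕ → S → (∀ i, A i) → ℝ :=
  fun h s a => ∏ i, π i h s (a i)

/-- Joint action prescribed by a deterministic (product) policy. -/
def tgtJ (τ : ∀ i : Fin m, ℕ → S → A i) (h : ℕ) (s : S) : ∀ i, A i := fun i => τ i h s

/-- A deterministic policy viewed as a (point-mass) stochastic policy. -/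
noncomputable def detP (τ : ∀ i : Fin m, ℕ → S → A i) : ∀ i : Fin m, ℕ → S → A i → ℝ :=
  fun i h s b => if b = τ i h s then 1 else 0

/-- `P` is a transition kernel for the steps `1, …, H`. -/
def IsKernel (H : ℕ) (P : ℕ → S → (∀ i, A i) → S → ℝ) : Prop :=
  ∀ h ∈ Finset.Icc 1 H, ∀ s a, (∀ s', 0 ≤ P h s a s') ∧ ∑ s', P h s a s' = 1

/-- `π` is a Markov product policy for the steps `1, …, H`. -/
def IsPolicy (H : ℕ) (π : ∀ i : Fin m, ℕ → S → A i → ℝ) : Prop :=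
  ∀ i : Fin m, ∀ h ∈ Finset.Icc 1 H, ∀ s, (∀ b, 0 ≤ π i h s b) ∧ ∑ b, π i h s b = 1

/-- `πi` is a Markov policy for the single agent `i`. -/
def IsPolicyI (H : ℕ) {i : Fin m} (πi : ℕ → S → A i → ℝ) : Prop :=
  ∀ h ∈ Finset.Icc 1 H, ∀ s, (∀ b, 0 ≤ πi h s b) ∧ ∑ b, πi h s b = 1

/-- The mean rewards all lie in `[0,1]`. -/
def IsReward (H : ℕ) (R : Fin m → ℕ → S → (∀ i, A i) → ℝ) : Prop :=
  ∀ i, ∀ h ∈ Finset.Icc 1 H, ∀ s a, R i h s a ∈ Set.Icc (0 : ℝ) 1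

/-- `d_h(s,a) = m/2 + (1/2) ∑_i 1(a_i = π†_{i,h}(s))` of the `d`-portion attack. -/
noncomputable def dfun (τ : ∀ i : Fin m, ℕ → S → A i) (h : ℕ) (s : S) (a : ∀ i, A i) : ℝ :=
  (m : ℝ) / 2 + (∑ i, if a i = τ i h s then (1 : ℝ) else 0) / 2

/-- Post-attack mean rewards of the `d`-portion attack (target `τ`, worse policy `τ'`). -/
noncomputable def Rport (R : Fin m → ℕ → S → (∀ i, A i) → ℝ) (τ τ' : ∀ i : Fin m, ℕ → S → A i)
    (i : Fin m) : ℕ → S → (∀ i, A i) → ℝ :=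
  fun h s a => (dfun τ h s a / m) * R i h s (tgtJ τ h s)
    + (1 - dfun τ h s a / m) * R i h s (tgtJ τ' h s)

/-- Post-attack transition probabilities of the `d`-portion attack. -/
noncomputable def Pport (P : ℕ → S → (∀ i, A i) → S → ℝ) (τ τ' : ∀ i : Fin m, ℕ → S → A i) :
    ℕ → S → (∀ i, A i) → S → ℝ :=
  fun h s a s' => (dfun τ h s a / m) * P h s (tgtJ τ h s) s'
    + (1 - dfun τ h s a / m) * P h s (tgtJ τ' h s) s'

/-- `Δ^{†−}_{i,h}(s) = Q^{π†}_{i,h}(s, π†_h(s)) − Q^{π†}_{i,h}(s, π⁻_h(s))` (original game). -/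
noncomputable def Δdag (P : ℕ → S → (∀ i, A i) → S → ℝ) (R : Fin m → ℕ → S → (∀ i, A i) → ℝ)
    (τ τ' : ∀ i : Fin m, ℕ → S → A i) (H : ℕ) (i : Fin m) (h : ℕ) (s : S) : ℝ :=
  Qf P (R i) (jp (detP τ)) H h s (tgtJ τ h s) - Qf P (R i) (jp (detP τ)) H h s (tgtJ τ' h s)

/-- Post-attack mean rewards of the `η`-gap attack; `ΔR i` is the reward spread of agent `i`. -/
noncomputable def Rgap (R : Fin m → ℕ → S → (∀ i, A i) → ℝ) (τ : ∀ i : Fin m, ℕ → S → A i)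
    (η : ℝ) (ΔR : Fin m → ℝ) (H : ℕ) (i : Fin m) : ℕ → S → (∀ i, A i) → ℝ :=
  fun h s a =>
    if a = tgtJ τ h s then R i h s a
    else R i h s (tgtJ τ h s) - (η + ((H - h : ℕ) : ℝ) * ΔR i) * (if a i = τ i h s then 0 else 1)

/-- Post-attack mean rewards of the mixed attack. -/
noncomputable def Rmix (R : Fin m → ℕ → S → (∀ i, A i) → ℝ) (τ : ∀ i : Fin m, ℕ → S → A i)
    (i : Fin m) : ℕ → S → (∀ i, A i) → ℝ :=
  fun h s a => (if a i = τ i h s then (1 : ℝ) else 0) * R i h s (tgtJ τ h s)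

/-- Post-attack transition probabilities of the mixed attack. -/
def Pmix (P : ℕ → S → (∀ i, A i) → S → ℝ) (τ : ∀ i : Fin m, ℕ → S → A i) :
    ℕ → S → (∀ i, A i) → S → ℝ :=
  fun h s a s' => P h s (tgtJ τ h s) s'

/-- Probability of being in state `s'` after `n` steps, starting from `(h, s)` and following
the deterministic policy `τ` under the transitions `P`. -/
noncomputable def reach (P : ℕ → S → (∀ i, A i) → S → ℝ) (τ : ∀ i : Fin m, ℕ → S → A i) :
    ℕ → ℕ → S → S → ℝ
  | 0, _, s, s' => if s' = s then 1 else 0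
  | n + 1, h, s, s' => ∑ t, P h s (tgtJ τ h s) t * reach P τ n (h + 1) t s'

/-- Expected sum of a state-dependent function along the Markov chain `Ps`. -/
noncomputable def SSum (Ps : ℕ → S → S → ℝ) (f : ℕ → S → ℝ) : ℕ → ℕ → S → ℝ
  | 0, _, _ => 0
  | n + 1, h, s => f h s + ∑ s', Ps h s s' * SSum Ps f n (h + 1) s'

end MGAttack
namespace MGAttack

section Aux
variable {S : Type} [Fintype S] [DecidableEq S]
variable {m : ℕ} {A : Fin m → Type} [∀ i, Fintype (A i)] [∀ i, DecidableEq (A i)]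

lemma Rgap_eq (R : Fin m → ℕ → S → (∀ i, A i) → ℝ) (τ : ∀ i : Fin m, ℕ → S → A i)
    (η : ℝ) (ΔR : Fin m → ℝ) (H : ℕ) (i : Fin m) (h : ℕ) (s : S) (a : ∀ j, A j) :
    Rgap R τ η ΔR H i h s a
      = R i h s (tgtJ τ h s)
        - (η + ((H - h : ℕ) : ℝ) * ΔR i) * (if a i = τ i h s then 0 else 1) := by
  unfold Rgap
  by_cases hA : a = tgtJ τ h s
  · subst hA; simp [tgtJ]
  · simp [hA]

lemma jp_update (π : ∀ j : Fin m, ℕ → S → A j → ℝ) (i : Fin m) (κ : ℕ → S → A i → ℝ)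
    (h : ℕ) (s : S) (a : ∀ j, A j) :
    jp (Function.update π i κ) h s a
      = κ h s (a i) * ∏ j ∈ Finset.univ.erase i, π j h s (a j) := by
  unfold jp
  rw [← Finset.mul_prod_erase _ _ (Finset.mem_univ i), Function.update_self]
  congr 1
  exact Finset.prod_congr rfl fun j hj => by
    rw [Function.update_of_ne (Finset.ne_of_mem_erase hj)]

lemma sum_split (i : Fin m) (w : A i → ℝ) (Q : (∀ j, A j) → ℝ)
    (hQ : ∀ a b, Q (Function.update a i b) = Q a)
    (G : (∀ j, A j) → ℝ) (t : A i) :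
    ∑ a : ∀ j, A j, w (a i) * Q a * G (Function.update a i t)
      = (∑ b, w b) * ∑ a : ∀ j, A j, (if a i = t then 1 else 0) * Q a * G a := by
  have hS : ∀ b : A i,
      (∑ a ∈ Finset.univ.filter (fun a : ∀ j, A j => a i = b), Q a * G (Function.update a i t))
        = ∑ a ∈ Finset.univ.filter (fun a : ∀ j, A j => a i = t), Q a * G a := by
    intro b
    refine Finset.sum_nbij' (fun a => Function.update a i t) (fun a => Function.update a i b)
      ?_ ?_ ?_ ?_ ?_
    · intro a ha
      simp [Function.update_self]
    · intro a ha
      simp [Function.update_self]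
    · intro a ha
      have hai : a i = b := (Finset.mem_filter.mp ha).2
      rw [Function.update_idem, ← hai, Function.update_eq_self]
    · intro a ha
      have hai : a i = t := (Finset.mem_filter.mp ha).2
      rw [Function.update_idem, ← hai, Function.update_eq_self]
    · intro a ha
      rw [hQ]
  calc ∑ a : ∀ j, A j, w (a i) * Q a * G (Function.update a i t)
      = ∑ b : A i, ∑ a ∈ Finset.univ.filter (fun a : ∀ j, A j => a i = b),
          w (a i) * Q a * G (Function.update a i t) :=
        (Finset.sum_fiberwise_of_maps_to (fun a _ => Finset.mem_univ (a i)) _).symm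
    _ = ∑ b : A i, w b * ∑ a ∈ Finset.univ.filter (fun a : ∀ j, A j => a i = t), Q a * G a := by
        refine Finset.sum_congr rfl fun b _ => ?_
        rw [← hS b, Finset.mul_sum]
        refine Finset.sum_congr rfl fun a ha => ?_
        rw [(Finset.mem_filter.mp ha).2, mul_assoc]
    _ = (∑ b, w b) * ∑ a ∈ Finset.univ.filter (fun a : ∀ j, A j => a i = t), Q a * G a := by
        rw [← Finset.sum_mul]
    _ = (∑ b, w b) * ∑ a : ∀ j, A j, (if a i = t then 1 else 0) * Q a * G a := by
        congr 1
        rw [Finset.sum_filter]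
        exact Finset.sum_congr rfl fun a _ => by by_cases hc : a i = t <;> simp [hc]

lemma mass_eq_one (i : Fin m) (π : ∀ j : Fin m, ℕ → S → A j → ℝ) (h : ℕ) (s : S)
    (hπ : ∀ j, j ≠ i → ∑ b, π j h s b = 1) (t : A i) :
    ∑ a : ∀ j, A j, (if a i = t then 1 else 0) * ∏ j ∈ Finset.univ.erase i, π j h s (a j) = 1 := by
  classical
  set q : ∀ j : Fin m, A j → ℝ :=
    Function.update (fun j => π j h s) i (fun b => if b = t then 1 else 0) with hq
  have key : ∀ a : ∀ j, A j,
      (if a i = t then (1:ℝ) else 0) * ∏ j ∈ Finset.univ.erase i, π j h s (a j)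
        = ∏ j, q j (a j) := by
    intro a
    rw [← Finset.mul_prod_erase _ (fun j => q j (a j)) (Finset.mem_univ i), hq,
      Function.update_self]
    congr 1
    refine Finset.prod_congr rfl fun j hj => ?_
    rw [Function.update_of_ne (Finset.ne_of_mem_erase hj)]
  calc ∑ a : ∀ j, A j, (if a i = t then (1:ℝ) else 0) * ∏ j ∈ Finset.univ.erase i, π j h s (a j)
      = ∑ a : ∀ j, A j, ∏ j, q j (a j) := Finset.sum_congr rfl fun a _ => key a
    _ = ∏ j, ∑ b, q j b := (Fintype.prod_sum _).symm
    _ = 1 := by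
        refine Finset.prod_eq_one fun j _ => ?_
        by_cases hji : j = i
        · subst hji
          rw [hq, Function.update_self]
          simp
        · rw [hq, Function.update_of_ne hji]
          exact hπ j hji

end Aux
end MGAttack
namespace MGAttack
section Key
variable {S : Type} [Fintype S] [DecidableEq S]
variable {m : ℕ} {A : Fin m → Type} [∀ i, Fintype (A i)] [∀ i, DecidableEq (A i)]

lemma single_le_one {α : Type} [Fintype α] (f : α → ℝ) (h0 : ∀ b, 0 ≤ f b)
    (h1 : ∑ b, f b = 1) (b : α) : f b ≤ 1 := by
  rw [← h1]
  exact Finset.single_le_sum (fun c _ => h0 c) (Finset.mem_univ b)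

lemma key (H : ℕ) (P : ℕ → S → (∀ i, A i) → S → ℝ) (hP : IsKernel H P)
    (R : Fin m → ℕ → S → (∀ i, A i) → ℝ)
    (τ : ∀ i : Fin m, ℕ → S → A i) (η : ℝ) (hη : 0 ≤ η)
    (Rmax Rmin : Fin m → ℝ)
    (hub : ∀ i : Fin m, ∀ h ∈ Finset.Icc 1 H, ∀ s a, R i h s a ≤ Rmax i)
    (hlb : ∀ i : Fin m, ∀ h ∈ Finset.Icc 1 H, ∀ s a, Rmin i ≤ R i h s a) :
    ∀ n h, 1 ≤ h → h + n = H + 1 →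
      ∀ (π : ∀ j : Fin m, ℕ → S → A j → ℝ), IsPolicy H π →
      ∀ (i : Fin m) (κ : ℕ → S → A i → ℝ), IsPolicyI H κ → ∀ s : S,
      (((n : ℝ) * Rmin i
          ≤ VA P (Rgap R τ η (fun j => Rmax j - Rmin j) H i)
              (jp (Function.update π i (detP τ i))) n h s
        ∧ VA P (Rgap R τ η (fun j => Rmax j - Rmin j) H i)
              (jp (Function.update π i (detP τ i))) n h s ≤ (n : ℝ) * Rmax i)
      ∧ VA P (Rgap R τ η (fun j => Rmax j - Rmin j) H i)
              (jp (Function.update π i κ)) n h s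
            + η * ((1 : ℝ) - (if n = 0 then 1 else κ h s (τ i h s)))
          ≤ VA P (Rgap R τ η (fun j => Rmax j - Rmin j) H i)
              (jp (Function.update π i (detP τ i))) n h s) := by
  intro n
  induction n with
  | zero =>
    intro h h1 hsum π hπ i κ hκ s
    simp [VA]
  | succ n IH =>
    intro h h1 hsum π hπ i κ hκ s
    set ΔR : Fin m → ℝ := fun j => Rmax j - Rmin j with hΔR
    set Rt : ℕ → S → (∀ j, A j) → ℝ := Rgap R τ η ΔR H i with hRt
    have hh2 : h ≤ H := by omega
    have hmem : h ∈ Finset.Icc 1 H := Finset.mem_Icc.mpr ⟨h1, hh2⟩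
    have hnH : ((H - h : ℕ) : ℝ) = (n : ℝ) := by
      have : H - h = n := by omega
      rw [this]
    set t : A i := τ i h s with ht
    set Q : (∀ j, A j) → ℝ := fun a => ∏ j ∈ Finset.univ.erase i, π j h s (a j) with hQdef
    have hQupd : ∀ (a : ∀ j, A j) (b : A i), Q (Function.update a i b) = Q a := by
      intro a b
      refine Finset.prod_congr rfl fun j hj => ?_
      rw [Function.update_of_ne (Finset.ne_of_mem_erase hj)]
    have hQnn : ∀ a, 0 ≤ Q a := fun a =>
      Finset.prod_nonneg fun j hj => (hπ j h hmem s).1 (a j)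
    -- values at the next step
    set Vτ : S → ℝ := fun s' => VA P Rt (jp (Function.update π i (detP τ i))) n (h + 1) s'
      with hVτ
    set Vκ : S → ℝ := fun s' => VA P Rt (jp (Function.update π i κ)) n (h + 1) s' with hVκ
    have hIH := fun s' => IH (h + 1) (by omega) (by omega) π hπ i κ hκ s'
    have hVτlb : ∀ s', (n : ℝ) * Rmin i ≤ Vτ s' := fun s' => (hIH s').1.1
    have hVτub : ∀ s', Vτ s' ≤ (n : ℝ) * Rmax i := fun s' => (hIH s').1.2
    have hbonus : ∀ s', 0 ≤ η * ((1:ℝ) - (if n = 0 then 1 else κ (h+1) s' (τ i (h+1) s'))) :=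
      by
      intro s'
      rcases Nat.eq_zero_or_pos n with hn | hn
      · simp [hn]
      · have hm2 : h + 1 ∈ Finset.Icc 1 H := Finset.mem_Icc.mpr ⟨by omega, by omega⟩
        rw [if_neg (by omega : n ≠ 0)]
        have hk := hκ (h + 1) hm2 s'
        have := single_le_one _ hk.1 hk.2 (τ i (h + 1) s')
        nlinarith
    have hVle : ∀ s', Vκ s' ≤ Vτ s' := fun s' => by
      have := (hIH s').2
      nlinarith [hbonus s']
    have hPnn : ∀ a s', 0 ≤ P h s a s' := fun a => (hP h hmem s a).1
    have hPsum : ∀ a, ∑ s', P h s a s' = 1 := fun a => (hP h hmem s a).2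
    set G : (∀ j, A j) → ℝ := fun a => Rt h s a + ∑ s', P h s a s' * Vτ s' with hG
    -- ∑ P(a) Vτ bounds
    have hPVlb : ∀ a, (n : ℝ) * Rmin i ≤ ∑ s', P h s a s' * Vτ s' := by
      intro a
      calc (n : ℝ) * Rmin i = ∑ s', P h s a s' * ((n:ℝ) * Rmin i) := by
            rw [← Finset.sum_mul, hPsum a, one_mul]
        _ ≤ ∑ s', P h s a s' * Vτ s' :=
            Finset.sum_le_sum fun s' _ => mul_le_mul_of_nonneg_left (hVτlb s') (hPnn a s')
    have hPVub : ∀ a, ∑ s', P h s a s' * Vτ s' ≤ (n : ℝ) * Rmax i := by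
      intro a
      calc ∑ s', P h s a s' * Vτ s'
          ≤ ∑ s', P h s a s' * ((n:ℝ) * Rmax i) :=
            Finset.sum_le_sum fun s' _ => mul_le_mul_of_nonneg_left (hVτub s') (hPnn a s')
        _ = (n : ℝ) * Rmax i := by rw [← Finset.sum_mul, hPsum a, one_mul]
    -- Rt bounds / values
    have hRtt : ∀ a : ∀ j, A j, a i = t →
        Rt h s a = R i h s (tgtJ τ h s) := by
      intro a ha
      rw [hRt, Rgap_eq, ← ht, if_pos ha, mul_zero, sub_zero]
    have hRtne : ∀ a : ∀ j, A j, a i ≠ t →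
        Rt h s a = R i h s (tgtJ τ h s) - (η + (n:ℝ) * ΔR i) := by
      intro a ha
      rw [hRt, Rgap_eq, ← ht, if_neg ha, hnH, mul_one]
    -- pointwise gap
    have hGgap : ∀ a : ∀ j, A j, G a + η * (if a i = t then 0 else 1)
        ≤ G (Function.update a i t) := by
      intro a
      by_cases ha : a i = t
      · have : Function.update a i t = a := by rw [← ha, Function.update_eq_self]
        rw [this, if_pos ha, mul_zero, add_zero]
      · rw [if_neg ha, mul_one, hG]
        dsimp only
        have e1 : Rt h s (Function.update a i t) = R i h s (tgtJ τ h s) :=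
          hRtt _ (Function.update_self i t a)
        have e2 := hRtne a ha
        have b1 := hPVlb (Function.update a i t)
        have b2 := hPVub a
        rw [e1, e2, hΔR]
        have : (n:ℝ) * (Rmax i - Rmin i) = (n:ℝ) * Rmax i - (n:ℝ) * Rmin i := by ring
        rw [this]
        linarith
    -- joint pmf formulas
    have hjpκ : ∀ a : ∀ j, A j,
        jp (Function.update π i κ) h s a = κ h s (a i) * Q a := fun a => jp_update π i κ h s a
    have hjpd : ∀ a : ∀ j, A j,
        jp (Function.update π i (detP τ i)) h s a = (if a i = t then 1 else 0) * Q a := by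
      intro a
      rw [jp_update π i (detP τ i) h s a]
      rfl
    have hκs := hκ h hmem s
    have hκnn : ∀ b, 0 ≤ κ h s b := hκs.1
    have hκ1 : ∑ b, κ h s b = 1 := hκs.2
    have hM : ∑ a : ∀ j, A j, (if a i = t then (1:ℝ) else 0) * Q a = 1 :=
      mass_eq_one i π h s (fun j _ => (hπ j h hmem s).2) t
    -- unfolded forms of the two values at step h
    have eκ : VA P Rt (jp (Function.update π i κ)) (n + 1) h s
        = ∑ a : ∀ j, A j, (κ h s (a i) * Q a)
            * (Rt h s a + ∑ s', P h s a s' * Vκ s') := by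
      simp only [VA]
      exact Finset.sum_congr rfl fun a _ => by rw [hjpκ a]
    have ed : VA P Rt (jp (Function.update π i (detP τ i))) (n + 1) h s
        = ∑ a : ∀ j, A j, ((if a i = t then (1:ℝ) else 0) * Q a) * G a := by
      simp only [VA]
      exact Finset.sum_congr rfl fun a _ => by rw [hjpd a]
    have hGnnB : ∀ a : ∀ j, A j, a i = t →
        ((n:ℝ) + 1) * Rmin i ≤ G a ∧ G a ≤ ((n:ℝ) + 1) * Rmax i := by
      intro a ha
      have e0 := hRtt a ha
      have b1 := hPVlb a
      have b2 := hPVub a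
      have r1 := hlb i h hmem s (tgtJ τ h s)
      have r2 := hub i h hmem s (tgtJ τ h s)
      constructor
      · rw [hG]; dsimp only; rw [e0]; nlinarith
      · rw [hG]; dsimp only; rw [e0]; nlinarith
    constructor
    · -- part A
      rw [ed]
      constructor
      · calc ((n + 1 : ℕ) : ℝ) * Rmin i
            = ∑ a : ∀ j, A j, ((if a i = t then (1:ℝ) else 0) * Q a) * (((n+1 : ℕ):ℝ) * Rmin i) := by
              rw [← Finset.sum_mul, hM, one_mul]
          _ ≤ ∑ a : ∀ j, A j, ((if a i = t then (1:ℝ) else 0) * Q a) * G a := by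
              refine Finset.sum_le_sum fun a _ => ?_
              by_cases ha : a i = t
              · refine mul_le_mul_of_nonneg_left ?_ (by rw [if_pos ha, one_mul]; exact hQnn a)
                have := (hGnnB a ha).1
                push_cast
                linarith
              · simp [ha]
      · calc ∑ a : ∀ j, A j, ((if a i = t then (1:ℝ) else 0) * Q a) * G a
            ≤ ∑ a : ∀ j, A j, ((if a i = t then (1:ℝ) else 0) * Q a) * (((n+1 : ℕ):ℝ) * Rmax i) := by
              refine Finset.sum_le_sum fun a _ => ?_
              by_cases ha : a i = t
              · refine mul_le_mul_of_nonneg_left ?_ (by rw [if_pos ha, one_mul]; exact hQnn a)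
                have := (hGnnB a ha).2
                push_cast
                linarith
              · simp [ha]
          _ = ((n + 1 : ℕ) : ℝ) * Rmax i := by rw [← Finset.sum_mul, hM, one_mul]
    · -- part B
      rw [if_neg (by omega : ¬ (n + 1 = 0))]
      have hwnn : ∀ a : ∀ j, A j, 0 ≤ κ h s (a i) * Q a := fun a =>
        mul_nonneg (hκnn (a i)) (hQnn a)
      have step1 : VA P Rt (jp (Function.update π i κ)) (n + 1) h s
          ≤ ∑ a : ∀ j, A j, (κ h s (a i) * Q a) * G a := by
        rw [eκ]
        refine Finset.sum_le_sum fun a _ => mul_le_mul_of_nonneg_left ?_ (hwnn a)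
        rw [hG]
        dsimp only
        refine add_le_add le_rfl (Finset.sum_le_sum fun s' _ => ?_)
        exact mul_le_mul_of_nonneg_left (hVle s') (hPnn a s')
      have step2 : ∑ a : ∀ j, A j, (κ h s (a i) * Q a) * G a
          ≤ ∑ a : ∀ j, A j, (κ h s (a i) * Q a) * G (Function.update a i t)
            - η * ∑ a : ∀ j, A j, (κ h s (a i) * Q a) * (if a i = t then 0 else 1) := by
        have per : ∀ a : ∀ j, A j, (κ h s (a i) * Q a) * G a
            ≤ (κ h s (a i) * Q a) * G (Function.update a i t)
              - η * ((κ h s (a i) * Q a) * (if a i = t then 0 else 1)) := by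
          intro a
          have := mul_le_mul_of_nonneg_left (hGgap a) (hwnn a)
          rw [mul_add] at this
          linarith
        calc ∑ a : ∀ j, A j, (κ h s (a i) * Q a) * G a
            ≤ ∑ a : ∀ j, A j, ((κ h s (a i) * Q a) * G (Function.update a i t)
                - η * ((κ h s (a i) * Q a) * (if a i = t then 0 else 1))) :=
              Finset.sum_le_sum fun a _ => per a
          _ = _ := by rw [Finset.sum_sub_distrib, ← Finset.mul_sum]
      have E1 : ∑ a : ∀ j, A j, (κ h s (a i) * Q a) * G (Function.update a i t)
          = ∑ a : ∀ j, A j, ((if a i = t then (1:ℝ) else 0) * Q a) * G a := by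
        have h0 := sum_split i (κ h s) Q hQupd G t
        rw [hκ1, one_mul] at h0
        exact h0
      have E2 : ∑ a : ∀ j, A j, (κ h s (a i) * Q a) * (if a i = t then 0 else 1)
          = 1 - κ h s t := by
        have eA : ∑ a : ∀ j, A j, κ h s (a i) * Q a = 1 := by
          have h0 := sum_split i (κ h s) Q hQupd (fun _ => (1:ℝ)) t
          rw [hκ1, one_mul] at h0
          simp only [mul_one] at h0
          rw [h0]
          exact hM
        have eB : ∑ a : ∀ j, A j, (κ h s (a i) * (if a i = t then (1:ℝ) else 0)) * Q a
            = κ h s t := by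
          have h0 := sum_split i (fun b => κ h s b * (if b = t then (1:ℝ) else 0)) Q hQupd
            (fun _ => (1:ℝ)) t
          simp only [mul_one] at h0
          rw [h0, hM, mul_one]
          simp [mul_ite, mul_one, mul_zero]
        have per : ∀ a : ∀ j, A j, (κ h s (a i) * Q a) * (if a i = t then 0 else 1)
            = κ h s (a i) * Q a - (κ h s (a i) * (if a i = t then (1:ℝ) else 0)) * Q a := by
          intro a
          by_cases ha : a i = t <;> simp [ha]
        calc ∑ a : ∀ j, A j, (κ h s (a i) * Q a) * (if a i = t then 0 else 1)
            = ∑ a : ∀ j, A j, (κ h s (a i) * Q a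
                - (κ h s (a i) * (if a i = t then (1:ℝ) else 0)) * Q a) :=
              Finset.sum_congr rfl fun a _ => per a
          _ = 1 - κ h s t := by rw [Finset.sum_sub_distrib, eA, eB]
      have := step1.trans step2
      rw [E1, E2, ← ed] at this
      linarith
end Key
end MGAttack
namespace MGAttack
section Prop3
variable {S : Type} [Fintype S] [DecidableEq S]
variable {m : ℕ} {A : Fin m → Type} [∀ i, Fintype (A i)] [∀ i, DecidableEq (A i)]

lemma detP_isPolicy (H : ℕ) (τ : ∀ i : Fin m, ℕ → S → A i) : IsPolicy H (detP τ) := by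
  intro i h _ s
  constructor
  · intro b
    unfold detP
    split <;> norm_num
  · simp [detP]

lemma detP_isPolicyI (H : ℕ) (τ : ∀ i : Fin m, ℕ → S → A i) (i : Fin m) :
    IsPolicyI H (detP τ i) := fun h hh s => (detP_isPolicy H τ) i h hh s

lemma pointmass {α : Type} [Fintype α] [DecidableEq α] (f : α → ℝ) (h0 : ∀ b, 0 ≤ f b)
    (h1 : ∑ b, f b = 1) (b₀ : α) (hb : f b₀ = 1) (b : α) :
    f b = if b = b₀ then 1 else 0 := by
  by_cases hbb : b = b₀
  · rw [if_pos hbb, hbb, hb]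
  · rw [if_neg hbb]
    have hsplit : f b₀ + ∑ c ∈ Finset.univ.erase b₀, f c = 1 := by
      rw [Finset.add_sum_erase _ f (Finset.mem_univ b₀)]
      exact h1
    have hz : ∑ c ∈ Finset.univ.erase b₀, f c = 0 := by rw [hb] at hsplit; linarith
    have := (Finset.sum_eq_zero_iff_of_nonneg (fun c _ => h0 c)).mp hz
    exact this b (Finset.mem_erase.mpr ⟨hbb, Finset.mem_univ b⟩)

lemma jp_pointmass (π : ∀ j : Fin m, ℕ → S → A j → ℝ) (τ : ∀ i : Fin m, ℕ → S → A i)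
    (h : ℕ) (s : S) (hpm : ∀ (j : Fin m) (b : A j), π j h s b = if b = τ j h s then 1 else 0)
    (a : ∀ j, A j) :
    jp π h s a = if a = tgtJ τ h s then 1 else 0 := by
  unfold jp
  by_cases ha : a = tgtJ τ h s
  · subst ha
    rw [if_pos rfl]
    refine Finset.prod_eq_one fun j _ => ?_
    rw [hpm j]
    simp [tgtJ]
  · rw [if_neg ha]
    have : ∃ j, a j ≠ τ j h s := by
      by_contra hc
      push_neg at hc
      exact ha (funext hc)
    obtain ⟨j, hj⟩ := this
    refine Finset.prod_eq_zero (Finset.mem_univ j) ?_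
    rw [hpm j, if_neg hj]

lemma reach_zero (P : ℕ → S → (∀ i, A i) → S → ℝ) (τ : ∀ i : Fin m, ℕ → S → A i)
    (h : ℕ) (s s' : S) : reach P τ 0 h s s' = if s' = s then 1 else 0 := rfl

lemma reach_succ (P : ℕ → S → (∀ i, A i) → S → ℝ) (τ : ∀ i : Fin m, ℕ → S → A i)
    (k h : ℕ) (s s' : S) :
    reach P τ (k + 1) h s s' = ∑ u : S, P h s (tgtJ τ h s) u * reach P τ k (h + 1) u s' := rfl

lemma reach_nonneg (H : ℕ) (P : ℕ → S → (∀ i, A i) → S → ℝ) (hP : IsKernel H P)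
    (τ : ∀ i : Fin m, ℕ → S → A i) :
    ∀ k h, 1 ≤ h → h + k ≤ H + 1 → ∀ s s', 0 ≤ reach P τ k h s s' := by
  intro k
  induction k with
  | zero =>
    intro h _ _ s s'
    unfold reach
    split <;> norm_num
  | succ k IH =>
    intro h h1 hk s s'
    unfold reach
    refine Finset.sum_nonneg fun u _ => mul_nonneg ?_ (IH (h + 1) (by omega) (by omega) u s')
    exact (hP h (Finset.mem_Icc.mpr ⟨h1, by omega⟩) s (tgtJ τ h s)).1 u

lemma prop3 (H : ℕ) (P : ℕ → S → (∀ i, A i) → S → ℝ) (hP : IsKernel H P)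
    (R : Fin m → ℕ → S → (∀ i, A i) → ℝ)
    (τ : ∀ i : Fin m, ℕ → S → A i) (η : ℝ) (ΔR : Fin m → ℝ)
    (π : ∀ j : Fin m, ℕ → S → A j → ℝ) (hπ : IsPolicy H π) (i : Fin m) :
    ∀ k n h, 1 ≤ h → h + k + n = H + 1 →
      (∀ h' ∈ Finset.Ico h (h + k), ∀ (j : Fin m) (s' : S), π j h' s' (τ j h' s') = 1) →
      ∀ s : S,
      ∑ u : S, reach P τ k h s u *
          (VA P (Rgap R τ η ΔR H i) (jp (Function.update π i (detP τ i))) n (h + k) u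
            - VA P (Rgap R τ η ΔR H i) (jp π) n (h + k) u)
        ≤ VA P (Rgap R τ η ΔR H i) (jp (Function.update π i (detP τ i))) (k + n) h s
          - VA P (Rgap R τ η ΔR H i) (jp π) (k + n) h s := by
  intro k
  induction k with
  | zero =>
    intro n h h1 hsum hag s
    simp only [reach_zero]
    refine le_of_eq ?_
    rw [show h + 0 = h from rfl, show 0 + n = n from Nat.zero_add n]
    rw [Finset.sum_eq_single s]
    · rw [if_pos rfl, one_mul]
    · intro u _ hu
      rw [if_neg hu, zero_mul]
    · intro hs; exact absurd (Finset.mem_univ s) hs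
  | succ k IH =>
    intro n h h1 hsum hag s
    have hmem : h ∈ Finset.Icc 1 H := Finset.mem_Icc.mpr ⟨h1, by omega⟩
    have hPnn : ∀ s', 0 ≤ P h s (tgtJ τ h s) s' := (hP h hmem s (tgtJ τ h s)).1
    -- point-mass structure at step h
    have hpm : ∀ (j : Fin m) (b : A j), π j h s b = if b = τ j h s then 1 else 0 := by
      intro j b
      have hj := hπ j h hmem s
      exact pointmass _ hj.1 hj.2 _ (hag h (Finset.mem_Ico.mpr ⟨le_refl h, by omega⟩) j s) b
    have hpmd : ∀ (j : Fin m) (b : A j),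
        Function.update π i (detP τ i) j h s b = if b = τ j h s then 1 else 0 := by
      intro j b
      by_cases hji : j = i
      · subst hji
        rw [Function.update_self]
        rfl
      · rw [Function.update_of_ne hji]
        exact hpm j b
    have hjpπ := jp_pointmass π τ h s hpm
    have hjpd := jp_pointmass (Function.update π i (detP τ i)) τ h s hpmd
    -- unfold one step of both values
    have unf : ∀ ρ : ℕ → S → (∀ j, A j) → ℝ,
        (∀ a, ρ h s a = if a = tgtJ τ h s then 1 else 0) →
        VA P (Rgap R τ η ΔR H i) ρ (k + 1 + n) h s
          = Rgap R τ η ΔR H i h s (tgtJ τ h s)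
            + ∑ s', P h s (tgtJ τ h s) s' * VA P (Rgap R τ η ΔR H i) ρ (k + n) (h + 1) s' := by
      intro ρ hρ
      rw [show k + 1 + n = (k + n) + 1 by omega]
      simp only [VA]
      rw [Finset.sum_eq_single (tgtJ τ h s)]
      · rw [hρ, if_pos rfl, one_mul]
      · intro a _ ha
        rw [hρ, if_neg ha, zero_mul]
      · intro hs; exact absurd (Finset.mem_univ _) hs
    have unfd := unf _ hjpd
    have unfπ := unf _ hjpπ
    -- the inductive bound at step h+1
    have hIH : ∀ s' : S,
        ∑ u : S, reach P τ k (h + 1) s' u *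
            (VA P (Rgap R τ η ΔR H i) (jp (Function.update π i (detP τ i))) n (h + 1 + k) u
              - VA P (Rgap R τ η ΔR H i) (jp π) n (h + 1 + k) u)
          ≤ VA P (Rgap R τ η ΔR H i) (jp (Function.update π i (detP τ i))) (k + n) (h + 1) s'
            - VA P (Rgap R τ η ΔR H i) (jp π) (k + n) (h + 1) s' := by
      intro s'
      refine IH n (h + 1) (by omega) (by omega) ?_ s'
      intro h' hh' j s''
      refine hag h' ?_ j s''
      rw [Finset.mem_Ico] at hh' ⊢
      omega
    calc ∑ u : S, reach P τ (k + 1) h s u *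
            (VA P (Rgap R τ η ΔR H i) (jp (Function.update π i (detP τ i))) n (h + (k + 1)) u
              - VA P (Rgap R τ η ΔR H i) (jp π) n (h + (k + 1)) u)
        = ∑ u : S, ∑ s' : S, P h s (tgtJ τ h s) s' * reach P τ k (h + 1) s' u *
            (VA P (Rgap R τ η ΔR H i) (jp (Function.update π i (detP τ i))) n (h + 1 + k) u
              - VA P (Rgap R τ η ΔR H i) (jp π) n (h + 1 + k) u) := by
          simp only [reach_succ]
          rw [show h + (k + 1) = h + 1 + k by omega]
          exact Finset.sum_congr rfl fun u _ => Finset.sum_mul _ _ _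
      _ = ∑ s' : S, P h s (tgtJ τ h s) s' *
            (∑ u : S, reach P τ k (h + 1) s' u *
              (VA P (Rgap R τ η ΔR H i) (jp (Function.update π i (detP τ i))) n (h + 1 + k) u
                - VA P (Rgap R τ η ΔR H i) (jp π) n (h + 1 + k) u)) := by
          rw [Finset.sum_comm]
          refine Finset.sum_congr rfl fun s' _ => ?_
          rw [Finset.mul_sum]
          exact Finset.sum_congr rfl fun u _ => by ring
      _ ≤ ∑ s' : S, P h s (tgtJ τ h s) s' *
            (VA P (Rgap R τ η ΔR H i) (jp (Function.update π i (detP τ i))) (k + n) (h + 1) s'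
              - VA P (Rgap R τ η ΔR H i) (jp π) (k + n) (h + 1) s') :=
          Finset.sum_le_sum fun s' _ => mul_le_mul_of_nonneg_left (hIH s') (hPnn s')
      _ = VA P (Rgap R τ η ΔR H i) (jp (Function.update π i (detP τ i))) (k + 1 + n) h s
            - VA P (Rgap R τ η ΔR H i) (jp π) (k + 1 + n) h s := by
          rw [unfd, unfπ]
          rw [Finset.sum_congr rfl fun s' (_ : s' ∈ Finset.univ) =>
            mul_sub (P h s (tgtJ τ h s) s')
              (VA P (Rgap R τ η ΔR H i) (jp (Function.update π i (detP τ i))) (k + n) (h + 1) s')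
              (VA P (Rgap R τ η ΔR H i) (jp π) (k + n) (h + 1) s')]
          rw [Finset.sum_sub_distrib]
          ring
end Prop3
end MGAttack
namespace MGAttack

/-- Under Condition 2 and the `η`-gap attack: (i) for every agent `i` and every product
policy of the others, `π†_i` is a best response in the post-attack game; (ii) `π†` is a
Nash equilibrium of the post-attack game; (iii) if every state is reachable at every step
under `π†`, then any Nash equilibrium product policy of the post-attack game agrees with
`π†` at every state and step, i.e. `π†` is the unique Nash equilibrium. -/
theorem stmt11 {S : Type} [Fintype S] [DecidableEq S]
    {m : ℕ} {A : Fin m → Type} [∀ i, Fintype (A i)] [∀ i, DecidableEq (A i)]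
    (H : ℕ) (hH : 1 ≤ H) (hm : 1 ≤ m)
    (P : ℕ → S → (∀ i, A i) → S → ℝ) (hP : IsKernel H P)
    (R : Fin m → ℕ → S → (∀ i, A i) → ℝ) (hR : IsReward H R)
    (τ : ∀ i : Fin m, ℕ → S → A i) (η : ℝ) (hη : 0 < η)
    (Rmax Rmin : Fin m → ℝ)
    (hmax : ∀ i : Fin m, IsGreatest
      {x : ℝ | ∃ h ∈ Finset.Icc 1 H, ∃ s : S, ∃ a : ∀ j, A j, x = R i h s a} (Rmax i))
    (hmin : ∀ i : Fin m, IsLeast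
      {x : ℝ | ∃ h ∈ Finset.Icc 1 H, ∃ s : S, ∃ a : ∀ j, A j, x = R i h s a} (Rmin i))
    -- Condition 2
    (hcond2 : ∀ i : Fin m, ∀ h ∈ Finset.Icc 1 H, ∀ s : S,
      ((H - h : ℕ) : ℝ) * (Rmax i - Rmin i) ≤ R i h s (tgtJ τ h s) - η) :
    -- (i) best response toward any product policy of the other agents
    (∀ π : ∀ j : Fin m, ℕ → S → A j → ℝ, IsPolicy H π →
      ∀ i : Fin m, ∀ πi : ℕ → S → A i → ℝ, IsPolicyI H πi → ∀ s : S,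
        Vf P (Rgap R τ η (fun j => Rmax j - Rmin j) H i)
            (jp (Function.update π i πi)) H 1 s
          ≤ Vf P (Rgap R τ η (fun j => Rmax j - Rmin j) H i)
              (jp (Function.update π i (detP τ i))) H 1 s)
    -- (ii) `π†` is a Nash equilibrium
    ∧ (∀ i : Fin m, ∀ πi : ℕ → S → A i → ℝ, IsPolicyI H πi → ∀ s : S,
        Vf P (Rgap R τ η (fun j => Rmax j - Rmin j) H i)
            (jp (Function.update (detP τ) i πi)) H 1 s
          ≤ Vf P (Rgap R τ η (fun j => Rmax j - Rmin j) H i) (jp (detP τ)) H 1 s)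
    -- (iii) uniqueness under reachability
    ∧ ((∀ h ∈ Finset.Icc 1 H, ∀ s : S, ∃ s₁ : S, 0 < reach P τ (h - 1) 1 s₁ s) →
        ∀ π : ∀ j : Fin m, ℕ → S → A j → ℝ, IsPolicy H π →
          (∀ i : Fin m, ∀ πi : ℕ → S → A i → ℝ, IsPolicyI H πi → ∀ s : S,
            Vf P (Rgap R τ η (fun j => Rmax j - Rmin j) H i)
                (jp (Function.update π i πi)) H 1 s
              ≤ Vf P (Rgap R τ η (fun j => Rmax j - Rmin j) H i) (jp π) H 1 s) →
          ∀ i : Fin m, ∀ h ∈ Finset.Icc 1 H, ∀ s : S, π i h s (τ i h s) = 1) := by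
  classical
  have hub : ∀ i : Fin m, ∀ h ∈ Finset.Icc 1 H, ∀ s a, R i h s a ≤ Rmax i :=
    fun i h hh s a => (hmax i).2 ⟨h, hh, s, a, rfl⟩
  have hlb : ∀ i : Fin m, ∀ h ∈ Finset.Icc 1 H, ∀ s a, Rmin i ≤ R i h s a :=
    fun i h hh s a => (hmin i).2 ⟨h, hh, s, a, rfl⟩
  have hkey := key H P hP R τ η hη.le Rmax Rmin hub hlb
  have h1m : (1 : ℕ) ∈ Finset.Icc 1 H := Finset.mem_Icc.mpr ⟨le_rfl, hH⟩
  -- part (i)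
  have hbr : ∀ π : ∀ j : Fin m, ℕ → S → A j → ℝ, IsPolicy H π →
      ∀ i : Fin m, ∀ πi : ℕ → S → A i → ℝ, IsPolicyI H πi → ∀ s : S,
        Vf P (Rgap R τ η (fun j => Rmax j - Rmin j) H i)
            (jp (Function.update π i πi)) H 1 s
          ≤ Vf P (Rgap R τ η (fun j => Rmax j - Rmin j) H i)
              (jp (Function.update π i (detP τ i))) H 1 s := by
    intro π hπ i πi hπi s
    have hk := (hkey H 1 le_rfl (by omega) π hπ i πi hπi s).2
    rw [if_neg (by omega : ¬ H = 0)] at hk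
    have hp := hπi 1 h1m s
    have hle1 := single_le_one _ hp.1 hp.2 (τ i 1 s)
    simp only [Vf, Nat.add_sub_cancel]
    nlinarith [mul_nonneg hη.le (sub_nonneg.mpr hle1)]
  refine ⟨hbr, ?_, ?_⟩
  · -- part (ii)
    intro i πi hπi s
    have := hbr (detP τ) (detP_isPolicy H τ) i πi hπi s
    rwa [Function.update_eq_self i (detP τ)] at this
  · -- part (iii)
    intro hre π hπ hNE
    suffices key3 : ∀ h, 1 ≤ h → h ≤ H → ∀ (i : Fin m) (s : S), π i h s (τ i h s) = 1 by
      intro i h hh s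
      exact key3 h (Finset.mem_Icc.mp hh).1 (Finset.mem_Icc.mp hh).2 i s
    intro h
    induction h using Nat.strong_induction_on with
    | _ h IH3 =>
    intro h1 hhH i s
    obtain ⟨s₁, hs₁⟩ := hre h (Finset.mem_Icc.mpr ⟨h1, hhH⟩) s
    set ΔR : Fin m → ℝ := fun j => Rmax j - Rmin j with hΔR
    set n := H + 1 - h with hn
    have hπiI : IsPolicyI H (π i) := fun h' hh' s' => hπ i h' hh' s'
    -- quantitative best-response bound at step h
    have hq : ∀ u : S,
        VA P (Rgap R τ η ΔR H i) (jp π) n h u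
            + η * (1 - π i h u (τ i h u))
          ≤ VA P (Rgap R τ η ΔR H i) (jp (Function.update π i (detP τ i))) n h u := by
      intro u
      have hk := (hkey n h h1 (by omega) π hπ i (π i) hπiI u).2
      rw [Function.update_eq_self i π, if_neg (by omega : ¬ n = 0)] at hk
      exact hk
    have hqle1 : ∀ u : S, π i h u (τ i h u) ≤ 1 := by
      intro u
      have hp := hπ i h (Finset.mem_Icc.mpr ⟨h1, hhH⟩) u
      exact single_le_one _ hp.1 hp.2 (τ i h u)
    have hDnn : ∀ u : S,
        0 ≤ VA P (Rgap R τ η ΔR H i) (jp (Function.update π i (detP τ i))) n h u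
          - VA P (Rgap R τ η ΔR H i) (jp π) n h u := by
      intro u
      have := hq u
      nlinarith [mul_nonneg hη.le (sub_nonneg.mpr (hqle1 u))]
    -- propagation from step 1 to step h
    have hag : ∀ h' ∈ Finset.Ico 1 (1 + (h - 1)), ∀ (j : Fin m) (s' : S),
        π j h' s' (τ j h' s') = 1 := by
      intro h' hh' j s'
      rw [Finset.mem_Ico] at hh'
      exact IH3 h' (by omega) (by omega) (by omega) j s'
    have hprop := prop3 H P hP R τ η ΔR π hπ i (h - 1) n 1 le_rfl (by omega) hag s₁
    rw [show 1 + (h - 1) = h by omega, show h - 1 + n = H by omega] at hprop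
    have hterm : reach P τ (h - 1) 1 s₁ s *
          (VA P (Rgap R τ η ΔR H i) (jp (Function.update π i (detP τ i))) n h s
            - VA P (Rgap R τ η ΔR H i) (jp π) n h s)
        ≤ ∑ u : S, reach P τ (h - 1) 1 s₁ u *
            (VA P (Rgap R τ η ΔR H i) (jp (Function.update π i (detP τ i))) n h u
              - VA P (Rgap R τ η ΔR H i) (jp π) n h u) :=
      Finset.single_le_sum
        (fun u _ => mul_nonneg (reach_nonneg H P hP τ (h - 1) 1 le_rfl (by omega) s₁ u)
          (hDnn u)) (Finset.mem_univ s)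
    have hNEi := hNE i (detP τ i) (detP_isPolicyI H τ i) s₁
    simp only [Vf, Nat.add_sub_cancel] at hNEi
    have hchain : reach P τ (h - 1) 1 s₁ s *
          (VA P (Rgap R τ η ΔR H i) (jp (Function.update π i (detP τ i))) n h s
            - VA P (Rgap R τ η ΔR H i) (jp π) n h s) ≤ 0 := by
      calc _ ≤ _ := hterm
        _ ≤ _ := hprop
        _ ≤ 0 := by linarith
    have hDs := hq s
    refine le_antisymm (hqle1 s) ?_
    nlinarith [mul_le_mul_of_nonneg_left
        (show η * (1 - π i h s (τ i h s))
            ≤ VA P (Rgap R τ η ΔR H i) (jp (Function.update π i (detP τ i))) n h s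
              - VA P (Rgap R τ η ΔR H i) (jp π) n h s by linarith)
        hs₁.le,
      mul_pos hs₁ hη]

end MGAttack
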